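/- Let f : ℝ → ℝ be continuous on [0,∞) and suppose that the map t ↦ f(t)/t is monotone nondecreasing on (0,∞) and that lim_{t→0⁺} f(t)/t = 0. Then the Ambrosetti–Rabinowitz inequality 2·F(t) ≤ t·f(t) holds for every t > 0, where F(t) = ∫₀ᵗ f(s) ds. -/

import Mathlib

open Filter Set MeasureTheory

/-- If `f` is continuous on `[0,∞)`, `t ↦ f(t)/t` is monotone
nondecreasing on `(0,∞)` and `lim_{t→0⁺} f(t)/t = 0`, then the
Ambrosetti–Rabinowitz inequality `2 F(t) ≤ t f(t)` holds for every `t > 0`,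
where `F(t) = ∫₀ᵗ f`. -/
theorem stmt2 (f : ℝ → ℝ)
    (hf : ContinuousOn f (Set.Ici (0 : ℝ)))
    (hmono : MonotoneOn (fun t : ℝ => f t / t) (Set.Ioi 0))
    (hlim : Tendsto (fun t : ℝ => f t / t) (nhdsWithin 0 (Set.Ioi 0)) (nhds 0)) :
    ∀ t : ℝ, 0 < t → 2 * (∫ s in (0:ℝ)..t, f s) ≤ t * f t := by
  intro t ht
  set c : ℝ := f t / t with hc
  -- pointwise bound on (0, t]
  have key : ∀ s ∈ Set.Ioc (0:ℝ) t, f s ≤ s * c := by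
    intro s hs
    have h1 : f s / s ≤ c := hmono hs.1 ht hs.2
    have hspos : 0 < s := hs.1
    calc f s = s * (f s / s) := by field_simp
    _ ≤ s * c := by nlinarith
  have hint : IntervalIntegrable f volume 0 t :=
    (hf.mono (by rw [Set.uIcc_of_le ht.le]; exact Set.Icc_subset_Ici_self)).intervalIntegrable
  have hgint : IntervalIntegrable (fun s : ℝ => s * c) volume 0 t :=
    (continuous_id.mul continuous_const).intervalIntegrable 0 t
  have hae : ∀ᵐ s ∂(volume.restrict (Set.Icc (0:ℝ) t)), f s ≤ s * c := by
    have h0 : ∀ᵐ s : ℝ ∂(volume.restrict (Set.Icc (0:ℝ) t)), s ≠ 0 := by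
      refine ae_restrict_of_ae ?_
      refine (compl_mem_ae_iff.2 ?_)
      have h1 : {s : ℝ | s = 0} = {(0:ℝ)} := by ext s; simp
      show volume {s : ℝ | s = 0} = 0
      rw [h1]; exact Real.volume_singleton
    filter_upwards [ae_restrict_mem measurableSet_Icc, h0] with s hs hs0
    exact key s ⟨lt_of_le_of_ne hs.1 (Ne.symm hs0), hs.2⟩
  have hmono' : (∫ s in (0:ℝ)..t, f s) ≤ ∫ s in (0:ℝ)..t, s * c :=
    intervalIntegral.integral_mono_ae_restrict ht.le hint hgint hae
  have hcalc : (∫ s in (0:ℝ)..t, s * c) = t ^ 2 / 2 * c := by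
    rw [intervalIntegral.integral_mul_const, integral_id]
    ring
  rw [hcalc] at hmono'
  have : t ^ 2 / 2 * c = t * f t / 2 := by
    rw [hc]; field_simp
  nlinarith
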